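/- Let X be a δ-hyperbolic metric space and Σ a bounded set of isometries of X. Then D(Σ) = sup { D(B) : B ⊆ Σ, B finite and nonempty }, where D denotes the joint stable length. -/

import Mathlib

open Filter Topology Function

/-- The set `Sⁿ` of all compositions of `n` elements of `S`. -/
def powSet {X : Type*} (S : Set (X → X)) (n : ℕ) : Set (X → X) :=
  {g | ∃ l : List (X → X), l.length = n ∧ (∀ f ∈ l, f ∈ S) ∧ g = l.foldr (· ∘ ·) id}

/-- The joint displacement `|S|ₓ = sup_{f ∈ S} d(fx, x)`. -/
noncomputable def dispSup {X : Type*} [MetricSpace X] (x : X) (S : Set (X → X)) : ℝ :=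
  sSup ((fun f => dist (f x) x) '' S)

/-- The joint stable length `D(S) = inf_{n ≥ 1} |Sⁿ|ₓ / n`
(which equals `lim_n |Sⁿ|ₓ / n` by Fekete's lemma). -/
noncomputable def jointStable {X : Type*} [MetricSpace X] (S : Set (X → X)) (x : X) : ℝ :=
  ⨅ n : ℕ, dispSup x (powSet S (n + 1)) / (n + 1)

namespace Stmt10

variable {X : Type*} [MetricSpace X]

lemma foldr_comp_append (l₁ l₂ : List (X → X)) :
    (l₁ ++ l₂).foldr (· ∘ ·) id = (l₁.foldr (· ∘ ·) id) ∘ (l₂.foldr (· ∘ ·) id) := by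
  induction l₁ with
  | nil => rfl
  | cons f l ih => simp only [List.cons_append, List.foldr_cons, ih]; rfl

lemma mem_powSet_comp {S : Set (X → X)} {u v : X → X} {m n : ℕ}
    (hu : u ∈ powSet S m) (hv : v ∈ powSet S n) : u ∘ v ∈ powSet S (m + n) := by
  obtain ⟨l₁, h1, h2, rfl⟩ := hu
  obtain ⟨l₂, k1, k2, rfl⟩ := hv
  refine ⟨l₁ ++ l₂, by simp [h1, k1], ?_, (foldr_comp_append _ _).symm⟩
  intro f hf
  rcases List.mem_append.1 hf with h | h
  exacts [h2 f h, k2 f h]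

lemma isometry_foldr {S : Set (X → X)} (hS : ∀ f ∈ S, Isometry f) :
    ∀ l : List (X → X), (∀ f ∈ l, f ∈ S) → Isometry (l.foldr (· ∘ ·) id) := by
  intro l
  induction l with
  | nil => intro _; exact isometry_id
  | cons f l ih =>
    intro h
    simp only [List.foldr_cons]
    exact (hS f (h f List.mem_cons_self)).comp (ih fun g hg => h g (List.mem_cons_of_mem _ hg))

lemma powSet_isometry {S : Set (X → X)} (hS : ∀ f ∈ S, Isometry f) {g : X → X} {n : ℕ}
    (hg : g ∈ powSet S n) : Isometry g := by
  obtain ⟨l, -, hl, rfl⟩ := hg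
  exact isometry_foldr hS l hl

lemma dist_foldr_le {S : Set (X → X)} (hS : ∀ f ∈ S, Isometry f) (x : X) {C : ℝ}
    (hC : ∀ f ∈ S, dist (f x) x ≤ C) :
    ∀ l : List (X → X), (∀ f ∈ l, f ∈ S) → dist (l.foldr (· ∘ ·) id x) x ≤ l.length * C := by
  intro l
  induction l with
  | nil => intro _; simp
  | cons f l ih =>
    intro h
    have hf : f ∈ S := h f List.mem_cons_self
    have hl : ∀ g ∈ l, g ∈ S := fun g hg => h g (List.mem_cons_of_mem _ hg)
    simp only [List.foldr_cons, List.length_cons]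
    calc dist (f (l.foldr (· ∘ ·) id x)) x
        ≤ dist (f (l.foldr (· ∘ ·) id x)) (f x) + dist (f x) x := dist_triangle _ _ _
      _ = dist (l.foldr (· ∘ ·) id x) x + dist (f x) x := by rw [(hS f hf).dist_eq]
      _ ≤ l.length * C + C := add_le_add (ih hl) (hC f hf)
      _ = (l.length + 1) * C := by ring
      _ = ((l.length + 1 : ℕ) : ℝ) * C := by push_cast; ring

lemma powSet_nonempty {S : Set (X → X)} (hne : S.Nonempty) (n : ℕ) : (powSet S n).Nonempty := by
  obtain ⟨f, hf⟩ := hne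
  exact ⟨(List.replicate n f).foldr (· ∘ ·) id, List.replicate n f,
    List.length_replicate, fun g hg => (List.eq_of_mem_replicate hg) ▸ hf, rfl⟩

lemma bddAbove_disp {S : Set (X → X)} (hS : ∀ f ∈ S, Isometry f) (x : X) {C : ℝ}
    (hC : ∀ f ∈ S, dist (f x) x ≤ C) (n : ℕ) :
    BddAbove ((fun f => dist (f x) x) '' (powSet S n)) := by
  refine ⟨n * C, ?_⟩
  rintro r ⟨g, ⟨l, hlen, hl, rfl⟩, rfl⟩
  simpa [hlen] using dist_foldr_le hS x hC l hl

lemma le_dispSup {S : Set (X → X)} (hS : ∀ f ∈ S, Isometry f) (x : X) {C : ℝ}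
    (hC : ∀ f ∈ S, dist (f x) x ≤ C) {n : ℕ} {g : X → X} (hg : g ∈ powSet S n) :
    dist (g x) x ≤ dispSup x (powSet S n) :=
  le_csSup (bddAbove_disp hS x hC n) ⟨g, hg, rfl⟩

lemma dispSup_nonneg (x : X) (A : Set (X → X)) : 0 ≤ dispSup x A :=
  Real.sSup_nonneg (by rintro r ⟨g, -, rfl⟩; exact dist_nonneg)

lemma jointStable_nonneg (S : Set (X → X)) (x : X) : 0 ≤ jointStable S x :=
  Real.iInf_nonneg fun n => div_nonneg (dispSup_nonneg _ _) (by positivity)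

lemma dispSup_subadditive {S : Set (X → X)} (hS : ∀ f ∈ S, Isometry f) (x : X) {C : ℝ}
    (hC : ∀ f ∈ S, dist (f x) x ≤ C) :
    Subadditive (fun m => dispSup x (powSet S m)) := by
  intro m n
  have h0m : 0 ≤ dispSup x (powSet S m) := dispSup_nonneg _ _
  have h0n : 0 ≤ dispSup x (powSet S n) := dispSup_nonneg _ _
  refine Real.sSup_le ?_ (by linarith)
  rintro r ⟨g, ⟨l, hlen, hl, rfl⟩, rfl⟩
  have hsplit : l.foldr (· ∘ ·) id
      = ((l.take m).foldr (· ∘ ·) id) ∘ ((l.drop m).foldr (· ∘ ·) id) := by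
    rw [← foldr_comp_append, List.take_append_drop]
  have htake : (l.take m).length = m := by
    rw [List.length_take, hlen]; omega
  have hdrop : (l.drop m).length = n := by rw [List.length_drop, hlen]; omega
  have hmem1 : (l.take m).foldr (· ∘ ·) id ∈ powSet S m :=
    ⟨_, htake, fun f hf => hl f (List.take_subset m l hf), rfl⟩
  have hmem2 : (l.drop m).foldr (· ∘ ·) id ∈ powSet S n :=
    ⟨_, hdrop, fun f hf => hl f (List.drop_subset m l hf), rfl⟩
  set F := (l.take m).foldr (· ∘ ·) id
  set G := (l.drop m).foldr (· ∘ ·) id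
  have hFiso : Isometry F := powSet_isometry hS hmem1
  calc dist (l.foldr (· ∘ ·) id x) x = dist (F (G x)) x := by rw [hsplit]; rfl
    _ ≤ dist (F (G x)) (F x) + dist (F x) x := dist_triangle _ _ _
    _ = dist (G x) x + dist (F x) x := by rw [hFiso.dist_eq]
    _ ≤ dispSup x (powSet S n) + dispSup x (powSet S m) :=
        add_le_add (le_dispSup hS x hC hmem2) (le_dispSup hS x hC hmem1)
    _ = dispSup x (powSet S m) + dispSup x (powSet S n) := by ring

end Stmt10
section Part2
open Filter Topology Function Stmt10
namespace Stmt10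
variable {X : Type*} [MetricSpace X]

/-- Gromov product four-point inequality, in "either/or" form:
`(y·z)_w ≥ min((y·t)_w, (t·z)_w) - δ`. -/
lemma gromov {δ : ℝ}
    (hfpc : ∀ x y s t : X, dist x y + dist s t ≤
      max (dist x s + dist y t) (dist x t + dist y s) + 2 * δ)
    (w y z t : X) :
    (dist w y + dist w t - dist y t) / 2 - δ ≤ (dist w y + dist w z - dist y z) / 2 ∨
    (dist w t + dist w z - dist t z) / 2 - δ ≤ (dist w y + dist w z - dist y z) / 2 := by
  have h := hfpc y z w t
  have c1 : dist y w = dist w y := dist_comm _ _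
  have c2 : dist z w = dist w z := dist_comm _ _
  have c3 : dist z t = dist t z := dist_comm _ _
  rcases le_total (dist y t + dist z w) (dist y w + dist z t) with hc | hc
  · right; rw [max_eq_left hc] at h; linarith
  · left; rw [max_eq_right hc] at h; linarith

/-- If `x` is nearly on the axis of `f` (i.e. `d(f²x,x)` is almost `2 d(fx,x)`),
then the orbit of `x` under `f` grows linearly. -/
lemma orbit_growth {δ : ℝ} (hδ : 0 ≤ δ)
    (hfpc : ∀ x y s t : X, dist x y + dist s t ≤
      max (dist x s + dist y t) (dist x t + dist y s) + 2 * δ)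
    (f : X → X) (hf : Isometry f) (x : X) :
    ∀ k : ℕ, (k : ℝ) * (dist (f (f x)) x - dist (f x) x - 2 * δ) ≤ dist (f^[k] x) x := by
  set a : ℕ → ℝ := fun k => dist (f^[k] x) x with ha
  set M : ℝ := dist (f (f x)) x - dist (f x) x - 2 * δ with hM
  have ha1 : a 1 = dist (f x) x := by simp [ha]
  have hit2 : f^[2] x = f (f x) := by
    rw [Function.iterate_succ_apply', Function.iterate_one]
  have ha2 : a 2 = dist (f (f x)) x := by rw [ha]; simp only [hit2]
  have ha0 : a 0 = 0 := by simp [ha]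
  intro k
  rcases le_or_gt M 0 with hM0 | hM0
  · calc (k : ℝ) * M ≤ 0 := mul_nonpos_of_nonneg_of_nonpos (Nat.cast_nonneg _) hM0
      _ ≤ a k := dist_nonneg
  -- main case : M > 0
  have claim : ∀ k : ℕ, 1 ≤ k → a k + a 1 - a (k + 1) ≤ 2 * a 1 - a 2 + 2 * δ := by
    intro k hk
    induction k, hk using Nat.le_induction with
    | base => linarith
    | succ k hk ih =>
      have IH := ih
      have hsuc : ∀ m : ℕ, f^[m + 1] x = f (f^[m] x) := fun m =>
        Function.iterate_succ_apply' f m x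
      have d1 : dist (f x) (f (f x)) = dist (f x) x := by
        rw [hf.dist_eq, dist_comm]
      have d2 : dist (f x) (f^[k + 2] x) = a (k + 1) := by
        rw [hsuc (k + 1), hf.dist_eq, dist_comm]
      have d3 : dist (f (f x)) (f^[k + 2] x) = a k := by
        rw [hsuc (k + 1), hsuc k, hf.dist_eq, hf.dist_eq, dist_comm]
      have d4 : dist (f^[k + 2] x) x = a (k + 2) := rfl
      have d5 : dist (f x) x = a 1 := ha1.symm
      have d6 : dist (f (f x)) x = a 2 := ha2.symm
      have hkk : a (k + 1 + 1) = a (k + 2) := rfl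
      rcases gromov hfpc (f x) (f (f x)) x (f^[k + 2] x) with h | h
      · exfalso
        rw [d1, d2, d3, d5, d6] at h
        -- h : (a 1 + a (k+1) - a k)/2 - δ ≤ (a 1 + a 1 - a 2)/2
        -- IH gives a (k+1) ≥ a k + M', contradiction with M > 0
        have hM' : a 2 - a 1 - 2 * δ = M := by rw [hM, ha1, ha2]
        linarith
      · rw [d1, d2, d4, d5, d6] at h
        linarith
  have grow : ∀ k : ℕ, 1 ≤ k → a k + M ≤ a (k + 1) := by
    intro k hk
    have := claim k hk
    have hM' : a 2 - a 1 - 2 * δ = M := by rw [hM, ha1, ha2]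
    linarith
  have base : M ≤ a 1 := by
    have htri : a 2 ≤ a 1 + a 1 := by
      rw [ha1, ha2]
      calc dist (f (f x)) x ≤ dist (f (f x)) (f x) + dist (f x) x := dist_triangle _ _ _
        _ = dist (f x) x + dist (f x) x := by rw [hf.dist_eq]
    have hM' : a 2 - a 1 - 2 * δ = M := by rw [hM, ha1, ha2]
    linarith
  -- conclude by induction
  induction k with
  | zero => simp [ha0]
  | succ k ih =>
    rcases Nat.eq_zero_or_pos k with rfl | hk
    · simpa [ha1] using base
    · push_cast
      calc ((k : ℝ) + 1) * M = (k : ℝ) * M + M := by ring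
        _ ≤ a k + M := by linarith
        _ ≤ a (k + 1) := grow k hk

end Stmt10
end Part2
section Part3
open Filter Topology Function
namespace Stmt10
variable {X : Type*} [MetricSpace X]

set_option maxHeartbeats 1000000 in
/-- The key geometric inequality: the Gromov product `(u⁻¹x · vx)_x` (which measures
the failure of `d(uvx,x) = d(ux,x) + d(vx,x)`) is bounded below in terms of the
quantities controlling the stable lengths of `u`, `v` and `uv`. -/
lemma key_ineq {δ : ℝ} (hδ : 0 ≤ δ)
    (hfpc : ∀ x y s t : X, dist x y + dist s t ≤
      max (dist x s + dist y t) (dist x t + dist y s) + 2 * δ)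
    (u v : X → X) (hu : Isometry u) (hv : Isometry v) (x : X) :
    min (min ((2 * dist (u x) x - dist (u (u x)) x) / 2)
             ((2 * dist (v x) x - dist (v (v x)) x) / 2))
      (min ((2 * dist (u (v x)) x - dist (u (v (u (v x)))) x) / 2)
        (min ((dist (u x) x + dist (u (v x)) x - dist (v x) x) / 2)
             ((dist (v x) x + dist (u (v x)) x - dist (u x) x) / 2))) - 4 * δ
    ≤ (dist (u x) x + dist (v x) x - dist (u (v x)) x) / 2 := by
  set P := (2 * dist (u x) x - dist (u (u x)) x) / 2 with hP
  set Q := (2 * dist (v x) x - dist (v (v x)) x) / 2 with hQ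
  set R := (2 * dist (u (v x)) x - dist (u (v (u (v x)))) x) / 2 with hR
  set G1 := (dist (u x) x + dist (u (v x)) x - dist (v x) x) / 2 with hG1
  set G2 := (dist (v x) x + dist (u (v x)) x - dist (u x) x) / 2 with hG2
  have m1 : min (min P Q) (min R (min G1 G2)) ≤ P :=
    (min_le_left _ _).trans (min_le_left _ _)
  have m2 : min (min P Q) (min R (min G1 G2)) ≤ Q :=
    (min_le_left _ _).trans (min_le_right _ _)
  have m3 : min (min P Q) (min R (min G1 G2)) ≤ R :=
    (min_le_right _ _).trans (min_le_left _ _)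
  have m4 : min (min P Q) (min R (min G1 G2)) ≤ G1 :=
    (min_le_right _ _).trans ((min_le_right _ _).trans (min_le_left _ _))
  have m5 : min (min P Q) (min R (min G1 G2)) ≤ G2 :=
    (min_le_right _ _).trans ((min_le_right _ _).trans (min_le_right _ _))
  have E1 : dist (u x) (u (u x)) = dist (u x) x := by rw [hu.dist_eq, dist_comm]
  have E2 : dist (u x) (u (v x)) = dist (v x) x := by rw [hu.dist_eq, dist_comm]
  have E3 : dist x (u (u x)) = dist (u (u x)) x := dist_comm _ _
  have E4 : dist x (u (v x)) = dist (u (v x)) x := dist_comm _ _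
  have E5 : dist (u (u x)) (u (v x)) = dist (u x) (v x) := hu.dist_eq _ _
  have E6 : dist (v x) (v (u x)) = dist (u x) x := by rw [hv.dist_eq, dist_comm]
  have E7 : dist (v x) (v (v x)) = dist (v x) x := by rw [hv.dist_eq, dist_comm]
  have E8 : dist (v (u x)) (v (v x)) = dist (u x) (v x) := hv.dist_eq _ _
  have E9 : dist x (v (v x)) = dist (v (v x)) x := dist_comm _ _
  have E10 : dist (u (v x)) (u (v (u x))) = dist (u x) x := by
    rw [hu.dist_eq, hv.dist_eq, dist_comm]
  have E11 : dist (u (v x)) (u x) = dist (v x) x := hu.dist_eq _ _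
  have E12 : dist (u (v (u x))) (u x) = dist (v (u x)) x := hu.dist_eq _ _
  have E13 : dist (u (v x)) (u (v (u (v x)))) = dist (u (v x)) x := by
    rw [hu.dist_eq, hv.dist_eq, dist_comm]
  have E14 : dist (u (v (u x))) (u (v (u (v x)))) = dist (v x) x := by
    rw [hu.dist_eq, hv.dist_eq, hu.dist_eq, dist_comm]
  have E15 : dist (u (v (u (v x)))) (u x) = dist (v (u (v x))) x := hu.dist_eq _ _
  have E16 : dist x (u x) = dist (u x) x := dist_comm _ _
  -- chain of four applications of the four-point condition
  have h3 := gromov hfpc (u x) x (u (v x)) (u (u x))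
  have h2 := gromov hfpc (v x) (v (u x)) (v (v x)) x
  have h1 := gromov hfpc (u (v x)) (u (v (u x))) (u x) (u (v (u (v x))))
  have h0 := gromov hfpc (u (v x)) (u (v (u (v x)))) (u x) x
  rcases h3 with h3 | h3 <;> rcases h2 with h2 | h2 <;>
    rcases h1 with h1 | h1 <;> rcases h0 with h0 | h0 <;>
  linarith [hu.dist_eq (v x) x, dist_comm (v (u x)) x, dist_comm (v (u (v x))) x]

end Stmt10
end Part3
section Part4
open Filter Topology Function
namespace Stmt10
variable {X : Type*} [MetricSpace X]

lemma powSet_zero (B : Set (X → X)) : powSet B 0 = {id} := by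
  ext g
  constructor
  · rintro ⟨l, hlen, -, rfl⟩
    rw [List.length_eq_zero_iff] at hlen
    subst hlen; rfl
  · rintro rfl
    exact ⟨[], rfl, by simp, rfl⟩

lemma powSet_mono {B S : Set (X → X)} (h : B ⊆ S) (n : ℕ) : powSet B n ⊆ powSet S n := by
  rintro g ⟨l, hlen, hl, rfl⟩
  exact ⟨l, hlen, fun f hf => h (hl f hf), rfl⟩

lemma jointStable_eq_lim {B : Set (X → X)} (hB : ∀ f ∈ B, Isometry f) (x : X)
    {C : ℝ} (hC : ∀ f ∈ B, dist (f x) x ≤ C) :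
    jointStable B x = (dispSup_subadditive hB x hC).lim := by
  rw [Subadditive.lim, jointStable, iInf]
  congr 1
  ext r
  simp only [Set.mem_range, Set.mem_image, Set.mem_Ici]
  constructor
  · rintro ⟨n, rfl⟩
    exact ⟨n + 1, by omega, by push_cast; ring⟩
  · rintro ⟨m, hm, rfl⟩
    obtain ⟨n, rfl⟩ : ∃ n, m = n + 1 := ⟨m - 1, (Nat.succ_pred_eq_of_pos hm).symm⟩
    exact ⟨n, by push_cast; ring⟩

lemma jointStable_ge_of_orbit {B : Set (X → X)} (hB : ∀ f ∈ B, Isometry f) (x : X)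
    {C : ℝ} (hC : ∀ f ∈ B, dist (f x) x ≤ C)
    {w : X → X} {L : ℕ} (hL : 1 ≤ L) (hw : w ∈ powSet B L) {M : ℝ}
    (hM : ∀ k : ℕ, (k : ℝ) * M ≤ dist (w^[k] x) x) :
    M / L ≤ jointStable B x := by
  have hsub := dispSup_subadditive hB x hC
  have hbdd : BddBelow (Set.range fun n : ℕ => dispSup x (powSet B n) / n) := by
    refine ⟨0, ?_⟩
    rintro r ⟨n, rfl⟩
    exact div_nonneg (dispSup_nonneg _ _) (Nat.cast_nonneg _)
  have hlim := hsub.tendsto_lim hbdd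
  rw [jointStable_eq_lim hB x hC]
  have hwk : ∀ k : ℕ, w^[k] ∈ powSet B (k * L) := by
    intro k
    induction k with
    | zero => rw [Function.iterate_zero, Nat.zero_mul, powSet_zero]; rfl
    | succ k ih =>
      have h := mem_powSet_comp hw ih
      have e : L + k * L = (k + 1) * L := by ring
      rw [Function.iterate_succ', ← e]
      exact h
  have hmul : Tendsto (fun k : ℕ => k * L) atTop atTop :=
    Filter.tendsto_atTop_mono (fun k => Nat.le_mul_of_pos_right k hL) tendsto_id
  have hsq : Tendsto (fun k : ℕ => dispSup x (powSet B (k * L)) / ((k * L : ℕ) : ℝ))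
      atTop (𝓝 (dispSup_subadditive hB x hC).lim) := hlim.comp hmul
  refine ge_of_tendsto hsq ?_
  filter_upwards [eventually_ge_atTop 1] with k hk
  have h1 : (k : ℝ) * M ≤ dispSup x (powSet B (k * L)) :=
    (hM k).trans (le_dispSup hB x hC (hwk k))
  have hk0 : (0 : ℝ) < k := by exact_mod_cast hk
  have hL0 : (0 : ℝ) < L := by exact_mod_cast hL
  have hkL : (0 : ℝ) < ((k * L : ℕ) : ℝ) := by positivity
  rw [div_le_div_iff₀ hL0 hkL]
  have : ((k * L : ℕ) : ℝ) = (k : ℝ) * L := by push_cast; ring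
  rw [this]
  nlinarith [mul_le_mul_of_nonneg_right h1 hL0.le]

lemma dispSup_mono {B S : Set (X → X)} (hBS : B ⊆ S) (hS : ∀ f ∈ S, Isometry f) (x : X)
    {C : ℝ} (hC : ∀ f ∈ S, dist (f x) x ≤ C) (n : ℕ) :
    dispSup x (powSet B n) ≤ dispSup x (powSet S n) := by
  refine Real.sSup_le ?_ (dispSup_nonneg _ _)
  rintro r ⟨g, hg, rfl⟩
  exact le_dispSup hS x hC (powSet_mono hBS n hg)

lemma jointStable_mono {B S : Set (X → X)} (hBS : B ⊆ S) (hS : ∀ f ∈ S, Isometry f) (x : X)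
    {C : ℝ} (hC : ∀ f ∈ S, dist (f x) x ≤ C) :
    jointStable B x ≤ jointStable S x := by
  refine ciInf_mono ?_ fun n => ?_
  · refine ⟨0, ?_⟩
    rintro r ⟨n, rfl⟩
    exact div_nonneg (dispSup_nonneg _ _) (by positivity)
  · have h := dispSup_mono hBS hS x hC (n + 1)
    have : (0:ℝ) < (n : ℝ) + 1 := by positivity
    gcongr

end Stmt10
end Part4
section Part5
open Filter Topology Function
namespace Stmt10
variable {X : Type*} [MetricSpace X]

/-- From a word `l₀` over `S` we get a finite subset `B` (its letters) whose joint stable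
length is bounded below using the orbit-growth lemma applied to the composition of `l₀`. -/
lemma case_helper {δ : ℝ} (hδ : 0 ≤ δ)
    (hfpc : ∀ x y s t : X, dist x y + dist s t ≤
      max (dist x s + dist y t) (dist x t + dist y s) + 2 * δ)
    {S : Set (X → X)} (hS : ∀ f ∈ S, Isometry f) (x : X)
    {C : ℝ} (hC : ∀ f ∈ S, dist (f x) x ≤ C)
    (l₀ : List (X → X)) (hl₀ : ∀ f ∈ l₀, f ∈ S) (hlen : 1 ≤ l₀.length) :
    ∃ B : Set (X → X), B ⊆ S ∧ B.Finite ∧ B.Nonempty ∧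
      (dist (l₀.foldr (· ∘ ·) id (l₀.foldr (· ∘ ·) id x)) x
        - dist (l₀.foldr (· ∘ ·) id x) x - 2 * δ) / (l₀.length : ℝ)
        ≤ jointStable B x := by
  set w := l₀.foldr (· ∘ ·) id with hw
  set B := {f | f ∈ l₀} with hB
  have hBS : B ⊆ S := fun f hf => hl₀ f hf
  have hBfin : B.Finite := l₀.finite_toSet
  have hBne : B.Nonempty := by
    obtain ⟨f, hf⟩ := List.exists_mem_of_length_pos (by omega : 0 < l₀.length)
    exact ⟨f, hf⟩
  have hBiso : ∀ f ∈ B, Isometry f := fun f hf => hS f (hBS hf)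
  have hBC : ∀ f ∈ B, dist (f x) x ≤ C := fun f hf => hC f (hBS hf)
  have hwB : w ∈ powSet B l₀.length := ⟨l₀, rfl, fun f hf => hf, rfl⟩
  have hwiso : Isometry w := powSet_isometry hBiso hwB
  have horb := orbit_growth hδ hfpc w hwiso x
  have h2 : w^[2] x = w (w x) := by
    rw [Function.iterate_succ_apply', Function.iterate_one]
  refine ⟨B, hBS, hBfin, hBne, ?_⟩
  exact jointStable_ge_of_orbit hBiso x hBC hlen hwB horb

set_option maxHeartbeats 4000000 in
/-- The main construction: for `0 < ε ≤ D(S)` there is a finite nonempty `B ⊆ S`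
with `D(B) ≥ D(S) - ε`. -/
lemma exists_finite_ge {δ : ℝ} (hδ : 0 ≤ δ)
    (hfpc : ∀ x y s t : X, dist x y + dist s t ≤
      max (dist x s + dist y t) (dist x t + dist y s) + 2 * δ)
    {S : Set (X → X)} (hS : ∀ f ∈ S, Isometry f) (hne : S.Nonempty) (x : X)
    {C : ℝ} (hC : ∀ f ∈ S, dist (f x) x ≤ C)
    {ε : ℝ} (hε : 0 < ε) (hεD : ε ≤ jointStable S x) :
    ∃ B : Set (X → X), B ⊆ S ∧ B.Finite ∧ B.Nonempty ∧
      jointStable S x - ε ≤ jointStable B x := by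
  set D := jointStable S x with hD
  have hD0 : 0 < D := lt_of_lt_of_le hε hεD
  set u : ℕ → ℝ := fun m => dispSup x (powSet S m) with hu
  have hsub : Subadditive u := dispSup_subadditive hS x hC
  have hbdd : BddBelow (Set.range fun n : ℕ => dispSup x (powSet S (n + 1)) / ((n : ℝ) + 1)) := by
    refine ⟨0, ?_⟩
    rintro r ⟨n, rfl⟩
    exact div_nonneg (dispSup_nonneg _ _) (by positivity)
  -- `u m ≥ m * D` for `m ≥ 1`
  have hml : ∀ m : ℕ, 1 ≤ m → (m : ℝ) * D ≤ u m := by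
    intro m hm
    have h := ciInf_le hbdd (m - 1)
    rw [← jointStable] at h
    have e : m - 1 + 1 = m := Nat.succ_pred_eq_of_pos hm
    rw [e] at h
    have ec : ((m - 1 : ℕ) : ℝ) + 1 = (m : ℝ) := by
      rw [Nat.cast_sub hm]; push_cast; ring
    rw [ec] at h
    have hm0 : (0 : ℝ) < m := by exact_mod_cast hm
    rw [le_div_iff₀ hm0] at h
    calc (m : ℝ) * D = D * m := by ring
      _ ≤ u m := h
  -- choose `N₀` with `N₀ * ε` large
  obtain ⟨N₁, hN₁⟩ := exists_nat_ge (100 * (δ + 1) / ε)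
  set N₀ := max N₁ 1 with hN₀def
  have hN₀1 : 1 ≤ N₀ := le_max_right _ _
  have hN₀ε : 100 * (δ + 1) ≤ (N₀ : ℝ) * ε := by
    rw [div_le_iff₀ hε] at hN₁
    have h1 : (N₁ : ℝ) ≤ (N₀ : ℝ) := by exact_mod_cast le_max_left _ _
    nlinarith
  -- choose `m` with `u m / m` close to `D`
  have hlt : (⨅ n : ℕ, dispSup x (powSet S (n + 1)) / ((n : ℝ) + 1)) < D + ε / 100 := by
    rw [← jointStable]; linarith
  obtain ⟨n₀, hn₀⟩ := exists_lt_of_ciInf_lt hlt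
  set m := n₀ + 1 with hmdef
  have hm1 : 1 ≤ m := by omega
  have hum : u m ≤ (m : ℝ) * (D + ε / 100) := by
    have hm0 : (0 : ℝ) < ((n₀ : ℝ) + 1) := by positivity
    rw [div_lt_iff₀ hm0] at hn₀
    have : ((m : ℕ) : ℝ) = (n₀ : ℝ) + 1 := by push_cast [hmdef]; ring
    rw [this]
    exact le_of_lt (by linarith)
  set n := N₀ * m with hndef
  have hn1 : 1 ≤ n := Nat.one_le_iff_ne_zero.2 (by positivity)
  have hnN₀ : N₀ ≤ n := Nat.le_mul_of_pos_right N₀ hm1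
  set N : ℝ := (n : ℝ) with hNdef
  have hN1 : (1 : ℝ) ≤ N := by rw [hNdef]; exact_mod_cast hn1
  have hN0 : (0 : ℝ) < N := by linarith
  have hNε : 100 * (δ + 1) ≤ N * ε := by
    have h1 : (N₀ : ℝ) ≤ N := by rw [hNdef]; exact_mod_cast hnN₀
    nlinarith
  have hNDε : N * ε ≤ N * D := by nlinarith
  have hun : u n ≤ N * (D + ε / 100) := by
    have h := hsub.apply_mul_add_le N₀ m 0
    have hu0 : u 0 = 0 := by
      rw [hu]
      show dispSup x (powSet S 0) = 0
      rw [powSet_zero, dispSup, Set.image_singleton]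
      simp
    rw [Nat.add_zero, hu0, add_zero] at h
    calc u n ≤ (N₀ : ℝ) * u m := h
      _ ≤ (N₀ : ℝ) * ((m : ℝ) * (D + ε / 100)) := by
          apply mul_le_mul_of_nonneg_left hum (by positivity)
      _ = N * (D + ε / 100) := by rw [hNdef, hndef]; push_cast; ring
  have h2n : 2 * N * D ≤ u (n + n) := by
    have h := hml (n + n) (by omega)
    have e : ((n + n : ℕ) : ℝ) = 2 * N := by push_cast; ring
    rw [e] at h
    exact h
  -- extremal element of `S^(n+n)`
  have hpne : ((fun f => dist (f x) x) '' powSet S (n + n)).Nonempty :=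
    (powSet_nonempty hne _).image _
  have hltsup : u (n + n) - 1 < sSup ((fun f => dist (f x) x) '' powSet S (n + n)) := by
    have : u (n + n) - 1 < u (n + n) := by linarith
    exact this
  obtain ⟨r, hrmem, hrlt⟩ := exists_lt_of_lt_csSup hpne hltsup
  obtain ⟨g, hgmem, rfl⟩ := hrmem
  obtain ⟨l, hlen, hlS, rfl⟩ := hgmem
  -- split the word in two halves
  have htlen : (l.take n).length = n := by rw [List.length_take, hlen]; omega
  have hdlen : (l.drop n).length = n := by rw [List.length_drop, hlen]; omega
  set uu := (l.take n).foldr (· ∘ ·) id with huu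
  set vv := (l.drop n).foldr (· ∘ ·) id with hvv
  have hsplit : l.foldr (· ∘ ·) id = uu ∘ vv := by
    rw [huu, hvv, ← foldr_comp_append, List.take_append_drop]
  have huuS : uu ∈ powSet S n := ⟨_, htlen, fun f hf => hlS f (List.take_subset n l hf), rfl⟩
  have hvvS : vv ∈ powSet S n := ⟨_, hdlen, fun f hf => hlS f (List.drop_subset n l hf), rfl⟩
  have huiso : Isometry uu := powSet_isometry hS huuS
  have hviso : Isometry vv := powSet_isometry hS hvvS
  have hau : dist (uu x) x ≤ u n := le_dispSup hS x hC huuS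
  have hav : dist (vv x) x ≤ u n := le_dispSup hS x hC hvvS
  have hauv : u (n + n) - 1 < dist (uu (vv x)) x := by
    have : dist (uu (vv x)) x = dist (l.foldr (· ∘ ·) id x) x := by rw [hsplit]; rfl
    rw [this]
    exact hrlt
  have htri : dist (uu (vv x)) x ≤ dist (vv x) x + dist (uu x) x := by
    calc dist (uu (vv x)) x ≤ dist (uu (vv x)) (uu x) + dist (uu x) x := dist_triangle _ _ _
      _ = dist (vv x) x + dist (uu x) x := by rw [huiso.dist_eq]
  set A : ℝ := N * D - N * ε / 100 - 1 with hA
  have hA100 : N * (D + ε / 100) = N * D + N * ε / 100 := by ring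
  have hauA : A ≤ dist (uu x) x := by
    rw [hA]; rw [hA100] at hun; linarith
  have havA : A ≤ dist (vv x) x := by
    rw [hA]; rw [hA100] at hun; linarith
  set T : ℝ := N * ε / 4 with hT
  -- the three candidate quantities
  by_cases hPc : (2 * dist (uu x) x - dist (uu (uu x)) x) / 2 ≤ T
  · -- use `u = uu`, the first half
    obtain ⟨B, h1, h2, h3, h4⟩ := case_helper hδ hfpc hS x hC (l.take n)
      (fun f hf => hlS f (List.take_subset n l hf)) (by omega)
    rw [htlen, ← huu] at h4
    refine ⟨B, h1, h2, h3, ?_⟩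
    have hgoal : D - ε ≤ (dist (uu (uu x)) x - dist (uu x) x - 2 * δ) / N := by
      rw [le_div_iff₀ hN0]
      nlinarith
    exact le_trans hgoal h4
  · by_cases hQc : (2 * dist (vv x) x - dist (vv (vv x)) x) / 2 ≤ T
    · -- use `vv`, the second half
      obtain ⟨B, h1, h2, h3, h4⟩ := case_helper hδ hfpc hS x hC (l.drop n)
        (fun f hf => hlS f (List.drop_subset n l hf)) (by omega)
      rw [hdlen, ← hvv] at h4
      refine ⟨B, h1, h2, h3, ?_⟩
      have hgoal : D - ε ≤ (dist (vv (vv x)) x - dist (vv x) x - 2 * δ) / N := by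
        rw [le_div_iff₀ hN0]
        nlinarith
      exact le_trans hgoal h4
    · by_cases hRc : (2 * dist (uu (vv x)) x - dist (uu (vv (uu (vv x)))) x) / 2 ≤ T
      · -- use the whole word
        obtain ⟨B, h1, h2, h3, h4⟩ := case_helper hδ hfpc hS x hC l hlS (by omega)
        rw [hlen] at h4
        have hcomp1 : l.foldr (· ∘ ·) id x = uu (vv x) := by rw [hsplit]; rfl
        have hcomp2 : l.foldr (· ∘ ·) id (l.foldr (· ∘ ·) id x) = uu (vv (uu (vv x))) := by
          rw [hsplit]; rfl
        rw [hcomp2, hcomp1] at h4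
        refine ⟨B, h1, h2, h3, ?_⟩
        have e2n : ((n + n : ℕ) : ℝ) = 2 * N := by push_cast; ring
        rw [e2n] at h4
        have hgoal : D - ε ≤ (dist (uu (vv (uu (vv x)))) x - dist (uu (vv x)) x - 2 * δ)
            / (2 * N) := by
          rw [le_div_iff₀ (by linarith : (0:ℝ) < 2 * N)]
          nlinarith
        exact le_trans hgoal h4
      · -- impossible: contradiction with the key inequality
        exfalso
        push_neg at hPc hQc hRc
        have hkey := key_ineq hδ hfpc uu vv huiso hviso x
        have hG1 : A ≤ (dist (uu x) x + dist (uu (vv x)) x - dist (vv x) x) / 2 := by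
          rw [hA]; rw [hA100] at hun; linarith
        have hG2 : A ≤ (dist (vv x) x + dist (uu (vv x)) x - dist (uu x) x) / 2 := by
          rw [hA]; rw [hA100] at hun; linarith
        have hminle : min T A ≤
            min (min ((2 * dist (uu x) x - dist (uu (uu x)) x) / 2)
                  ((2 * dist (vv x) x - dist (vv (vv x)) x) / 2))
              (min ((2 * dist (uu (vv x)) x - dist (uu (vv (uu (vv x)))) x) / 2)
                (min ((dist (uu x) x + dist (uu (vv x)) x - dist (vv x) x) / 2)
                     ((dist (vv x) x + dist (uu (vv x)) x - dist (uu x) x) / 2))) := by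
          refine le_min (le_min ?_ ?_) (le_min ?_ (le_min ?_ ?_))
          · exact (min_le_left T A).trans hPc.le
          · exact (min_le_left T A).trans hQc.le
          · exact (min_le_left T A).trans hRc.le
          · exact (min_le_right T A).trans hG1
          · exact (min_le_right T A).trans hG2
        have hc : min T A - 4 * δ ≤ (dist (uu x) x + dist (vv x) x - dist (uu (vv x)) x) / 2 :=
          le_trans (by linarith) hkey
        have hcub : (dist (uu x) x + dist (vv x) x - dist (uu (vv x)) x) / 2
            ≤ N * ε / 100 + 1 / 2 := by
          rw [hA100] at hun; linarith
        rcases le_total T A with hTA | hTA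
        · rw [min_eq_left hTA] at hc
          nlinarith
        · rw [min_eq_right hTA] at hc
          rw [hA] at hc
          nlinarith

end Stmt10
end Part5
section Part6
open Filter Topology Function Stmt10

/-- For a bounded set `Σ` of isometries of a `δ`-hyperbolic
metric space, `D(Σ)` is the supremum of `D(B)` over finite nonempty `B ⊆ Σ`. -/
theorem stmt10 {X : Type*} [MetricSpace X] (δ : ℝ) (hδ : 0 ≤ δ)
    (hfpc : ∀ x y s t : X, dist x y + dist s t ≤
      max (dist x s + dist y t) (dist x t + dist y s) + 2 * δ)
    (S : Set (X → X)) (hS : ∀ f ∈ S, Isometry f ∧ Function.Surjective f)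
    (hne : S.Nonempty)
    (x : X) (hb : ∃ C : ℝ, ∀ f ∈ S, dist (f x) x ≤ C) :
    jointStable S x =
      sSup {r : ℝ | ∃ B : Set (X → X),
        B ⊆ S ∧ B.Finite ∧ B.Nonempty ∧ r = jointStable B x} := by
  obtain ⟨C, hC⟩ := hb
  have hSiso : ∀ f ∈ S, Isometry f := fun f hf => (hS f hf).1
  obtain ⟨f₀, hf₀⟩ := hne
  set R := {r : ℝ | ∃ B : Set (X → X),
      B ⊆ S ∧ B.Finite ∧ B.Nonempty ∧ r = jointStable B x} with hRdef
  have hsingleton : jointStable {f₀} x ∈ R :=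
    ⟨{f₀}, Set.singleton_subset_iff.2 hf₀, Set.finite_singleton _,
      Set.singleton_nonempty _, rfl⟩
  have hRne : R.Nonempty := ⟨_, hsingleton⟩
  have hRbdd : BddAbove R := by
    refine ⟨jointStable S x, ?_⟩
    rintro r ⟨B, hBS, -, -, rfl⟩
    exact jointStable_mono hBS hSiso x hC
  apply le_antisymm
  · -- hard direction
    by_contra hcon
    push_neg at hcon
    set D := jointStable S x with hD
    have hkey : ∀ ε : ℝ, 0 < ε → ∃ r ∈ R, D - ε ≤ r := by
      intro ε hε
      rcases le_or_gt D ε with hDε | hDε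
      · refine ⟨jointStable {f₀} x, hsingleton, ?_⟩
        have := jointStable_nonneg {f₀} x
        linarith
      · obtain ⟨B, h1, h2, h3, h4⟩ :=
          exists_finite_ge hδ hfpc hSiso ⟨f₀, hf₀⟩ x hC hε hDε.le
        exact ⟨jointStable B x, ⟨B, h1, h2, h3, rfl⟩, h4⟩
    obtain ⟨r, hrR, hr⟩ := hkey ((D - sSup R) / 2) (by linarith)
    have hle : r ≤ sSup R := le_csSup hRbdd hrR
    linarith
  · refine csSup_le hRne ?_
    rintro r ⟨B, hBS, -, -, rfl⟩
    exact jointStable_mono hBS hSiso x hC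

end Part6
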